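/- Let μ and ν be probability measures on ℝ₊ with supports contained in [c,∞) for some c ≥ 2 and with μ ≤_icv ν, and let p = MPoi(μ), q = MPoi(ν). Then G_{p∘}(s) ≥ G_{q∘}(s) for all s ∈ [0, 1−2/c]. -/

import Mathlib

open MeasureTheory

/-- Probability generating function `G_p(s) = ∑ p(k) s^k`. -/
noncomputable def pgf (p : ℕ → ℝ) (s : ℝ) : ℝ := ∑' k : ℕ, p k * s ^ k

/-- Mean `m₁(p) = ∑ k p(k)`. -/
noncomputable def meanNat (p : ℕ → ℝ) : ℝ := ∑' k : ℕ, (k : ℝ) * p k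

/-- Downshifted size biasing `p∘(k) = (k+1) p(k+1) / m₁(p)`. -/
noncomputable def downshift (p : ℕ → ℝ) : ℕ → ℝ :=
  fun k => ((k : ℝ) + 1) * p (k + 1) / meanNat p

/-- The `μ`-mixed Poisson distribution: `MPoi(μ)(k) = ∫ e^{-λ} λ^k/k! μ(dλ)`. -/
noncomputable def mpoi (μ : Measure ℝ) : ℕ → ℝ :=
  fun k => ∫ l, Real.exp (-l) * l ^ k / (Nat.factorial k : ℝ) ∂μ

/-- The increasing concave order for measures on ℝ: integrals of increasing
concave functions (for which the integrals exist) are ordered. -/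
def icvLEmeas (μ ν : Measure ℝ) : Prop :=
  ∀ φ : ℝ → ℝ, Monotone φ → ConcaveOn ℝ Set.univ φ →
    Integrable φ μ → Integrable φ ν → ∫ x, φ x ∂μ ≤ ∫ x, φ x ∂ν



lemma aux_tsum_exp (x : ℝ) : ∑' n : ℕ, x ^ n / (Nat.factorial n : ℝ) = Real.exp x := by
  rw [Real.exp_eq_exp_ℝ, NormedSpace.exp_eq_tsum_div]

lemma aux_shift (x : ℝ) (k : ℕ) :
    ((k : ℝ) + 1) * (x ^ (k + 1) / (Nat.factorial (k + 1) : ℝ))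
      = x * (x ^ k / (Nat.factorial k : ℝ)) := by
  have h1 : ((Nat.factorial k : ℝ)) ≠ 0 := Nat.cast_ne_zero.2 k.factorial_pos.ne'
  have h2 : ((k : ℝ) + 1) ≠ 0 := by positivity
  rw [Nat.factorial_succ, pow_succ]
  push_cast
  field_simp

lemma aux_summable_mul (x : ℝ) :
    Summable (fun k : ℕ => (k : ℝ) * (x ^ k / (Nat.factorial k : ℝ))) := by
  rw [← summable_nat_add_iff 1]
  have : (fun k : ℕ => ((k : ℝ) + 1) * (x ^ (k + 1) / (Nat.factorial (k + 1) : ℝ)))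
      = fun k : ℕ => x * (x ^ k / (Nat.factorial k : ℝ)) := funext fun k => aux_shift x k
  simpa [this] using (Real.summable_pow_div_factorial x).mul_left x

lemma aux_tsum_mul (x : ℝ) :
    ∑' k : ℕ, (k : ℝ) * (x ^ k / (Nat.factorial k : ℝ)) = x * Real.exp x := by
  rw [Summable.tsum_eq_zero_add (aux_summable_mul x)]
  simp only [Nat.cast_zero, zero_mul, zero_add]
  have h2 : ∀ b : ℕ, ((b + 1 : ℕ) : ℝ) * (x ^ (b + 1) / (Nat.factorial (b + 1) : ℝ))
      = x * (x ^ b / (Nat.factorial b : ℝ)) := fun b => by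
    push_cast
    exact aux_shift x b
  rw [tsum_congr h2, tsum_mul_left, aux_tsum_exp]



lemma aux_interchange (μ : Measure ℝ) [IsProbabilityMeasure μ] (c : ℝ) (hc : 0 < c)
    (hsupp : μ {x | x < c} = 0) (hint : Integrable (fun x => x) μ)
    (f : ℕ → ℝ → ℝ) (hcont : ∀ k, Continuous (f k)) (g : ℝ → ℝ)
    (hpt : ∀ l, c ≤ l → Summable (fun k => f k l) ∧ (∀ k, 0 ≤ f k l) ∧
      (∑' k, f k l) = g l ∧ g l ≤ l) :
    ∑' k : ℕ, ∫ l, f k l ∂μ = ∫ l, g l ∂μ := by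
  have hae : ∀ᵐ l ∂μ, c ≤ l := by
    rw [ae_iff]
    simpa [not_le] using hsupp
  have hmeas : ∀ k, AEStronglyMeasurable (f k) μ := fun k =>
    (hcont k).aestronglyMeasurable
  have hf' : ∑' k : ℕ, ∫⁻ l, ‖f k l‖₊ ∂μ ≠ ⊤ := by
    rw [← lintegral_tsum (fun k => (hcont k).measurable.nnnorm.coe_nnreal_ennreal.aemeasurable)]
    have hb : ∫⁻ l, ∑' k : ℕ, (‖f k l‖₊ : ENNReal) ∂μ ≤ ∫⁻ l, ‖l‖₊ ∂μ := by
      refine lintegral_mono_ae (hae.mono fun l hl => ?_)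
      have hsum := (hpt l hl).1
      have hnn := (hpt l hl).2.1
      have htsum := (hpt l hl).2.2.1
      have hle := (hpt l hl).2.2.2
      calc ∑' k : ℕ, (‖f k l‖₊ : ENNReal)
          = ∑' k : ℕ, ENNReal.ofReal (f k l) := by
            exact tsum_congr fun k => Real.enorm_eq_ofReal (hnn k)
        _ = ENNReal.ofReal (∑' k, f k l) :=
            (ENNReal.ofReal_tsum_of_nonneg hnn hsum).symm
        _ ≤ ENNReal.ofReal l := by rw [htsum]; exact ENNReal.ofReal_le_ofReal hle
        _ ≤ ‖l‖₊ := Real.ofReal_le_enorm l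
    exact (lt_of_le_of_lt hb hint.2).ne
  rw [← integral_tsum hmeas hf']
  refine integral_congr_ae (hae.mono fun l hl => ?_)
  exact (hpt l hl).2.2.1



section GlueSection
open Set



lemma aux_glue (c t : ℝ) (hc : 0 < c) (htc : 2 ≤ t * c) :
    ∃ g : ℝ → ℝ, Monotone g ∧ ConcaveOn ℝ Set.univ g ∧ Continuous g ∧
      (∀ x, c ≤ x → g x = -(x * Real.exp (-(t * x)))) ∧
      (∀ x, ‖g x‖ ≤ (c * Real.exp (-(t * c)) + (Real.exp (-(t * c)) * (t * c - 1)) * c)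
        + ((Real.exp (-(t * c)) * (t * c - 1)) + 1) * |x|) := by
  have ht : 0 < t := by nlinarith
  set ψ : ℝ → ℝ := fun x => Real.exp (-(t * x)) * (t * x - 1) with hψdef
  set B : ℝ := ψ c with hBdef
  have hB0 : 0 ≤ B := mul_nonneg (Real.exp_pos _).le (by linarith)
  set h : ℝ → ℝ := fun x => -(x * Real.exp (-(t * x))) with hhdef
  set g : ℝ → ℝ := fun x => if x ≤ c then -(c * Real.exp (-(t * c))) + B * (x - c) else h x
    with hgdef
  set aff : ℝ → ℝ := fun x => -(c * Real.exp (-(t * c))) + B * (x - c) with haffdef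
  have hgc : ∀ x, c ≤ x → g x = h x := by
    intro x hx
    rcases eq_or_lt_of_le hx with rfl | hlt
    · simp [hgdef, hhdef]
    · simp [hgdef, not_le.2 hlt]
  -- derivatives
  have hasAff : ∀ x, HasDerivAt aff B x := by
    intro x
    have : HasDerivAt (fun x : ℝ => x - c) 1 x := (hasDerivAt_id x).sub_const c
    simpa [haffdef] using ((this.const_mul B).const_add (-(c * Real.exp (-(t * c)))))
  have hasExp : ∀ x : ℝ, HasDerivAt (fun x => Real.exp (-(t * x))) (Real.exp (-(t * x)) * (-t)) x := by
    intro x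
    have h1 : HasDerivAt (fun x : ℝ => -(t * x)) (-t) x := by
      simpa using ((hasDerivAt_id x).const_mul t).fun_neg
    exact h1.exp
  have hasH : ∀ x, HasDerivAt h (ψ x) x := by
    intro x
    have h3 := ((hasDerivAt_id x).fun_mul (hasExp x)).fun_neg
    refine HasDerivAt.congr_deriv h3 ?_
    simp [hψdef]
    ring
  have hasψ : ∀ x, HasDerivAt ψ (t * Real.exp (-(t * x)) * (2 - t * x)) x := by
    intro x
    have h1 : HasDerivAt (fun x : ℝ => t * x - 1) t x := by
      simpa using ((hasDerivAt_id x).const_mul t).sub_const 1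
    have := (hasExp x).fun_mul h1
    refine HasDerivAt.congr_deriv this ?_
    ring
  have hψanti : AntitoneOn ψ (Ici c) := by
    refine antitoneOn_of_deriv_nonpos (convex_Ici c) ?_ ?_ ?_
    · exact (Continuous.mul (by continuity) (by continuity)).continuousOn
    · intro x hx
      exact (hasψ x).differentiableAt.differentiableWithinAt
    · intro x hx
      rw [interior_Ici] at hx
      rw [(hasψ x).deriv]
      have : t * c ≤ t * x := mul_le_mul_of_nonneg_left (le_of_lt hx) ht.le
      have h2 : 2 - t * x ≤ 0 := by linarith
      exact mul_nonpos_of_nonneg_of_nonpos (mul_nonneg ht.le (Real.exp_pos _).le) h2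
  have hψ0 : ∀ x, c ≤ x → 0 ≤ ψ x := by
    intro x hx
    have : t * c ≤ t * x := mul_le_mul_of_nonneg_left hx ht.le
    exact mul_nonneg (Real.exp_pos _).le (by linarith)
  -- derivative of g
  have hgderiv : ∀ x, HasDerivAt g (if x ≤ c then B else ψ x) x := by
    intro x
    rcases lt_trichotomy x c with hx | hx | hx
    · rw [if_pos hx.le]
      refine (hasAff x).congr_of_eventuallyEq ?_
      filter_upwards [Iio_mem_nhds hx] with y hy
      simp only [hgdef, haffdef]
      rw [if_pos (le_of_lt (mem_Iio.mp hy))]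
    · subst hx
      rw [if_pos le_rfl]
      have h1 : HasDerivWithinAt g B (Iic x) x := by
        refine ((hasAff x).hasDerivWithinAt).congr ?_ ?_
        · intro y hy
          simp only [hgdef, haffdef]
          rw [if_pos (mem_Iic.mp hy)]
        · simp only [hgdef, haffdef]
          rw [if_pos le_rfl]
      have h2 : HasDerivWithinAt g B (Ici x) x := by
        have h3 : HasDerivWithinAt h (ψ x) (Ici x) x := (hasH x).hasDerivWithinAt
        exact h3.congr (fun y hy => hgc y (mem_Ici.mp hy)) (hgc x le_rfl)
      have h12 := h1.union h2
      rwa [Iic_union_Ici, hasDerivWithinAt_univ] at h12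
    · rw [if_neg (not_le.2 hx)]
      refine (hasH x).congr_of_eventuallyEq ?_
      filter_upwards [Ioi_mem_nhds hx] with y hy
      exact hgc y (le_of_lt (mem_Ioi.mp hy))
  have hdiff : Differentiable ℝ g := fun x => (hgderiv x).differentiableAt
  have hderiv : ∀ x, deriv g x = if x ≤ c then B else ψ x := fun x => (hgderiv x).deriv
  have hDanti : Antitone fun x => if x ≤ c then B else ψ x := by
    intro x y hxy
    show (if y ≤ c then B else ψ y) ≤ (if x ≤ c then B else ψ x)
    by_cases hy : y ≤ c
    · rw [if_pos hy, if_pos (hxy.trans hy)]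
    · rw [if_neg hy]
      by_cases hx : x ≤ c
      · rw [if_pos hx]
        exact hψanti self_mem_Ici (mem_Ici.2 (le_of_not_ge hy)) (le_of_not_ge hy)
      · rw [if_neg hx]
        exact hψanti (mem_Ici.2 (le_of_not_ge hx)) (mem_Ici.2 ((le_of_not_ge hx).trans hxy)) hxy
  have hD0 : ∀ x, 0 ≤ (if x ≤ c then B else ψ x) := by
    intro x
    by_cases hx : x ≤ c
    · rw [if_pos hx]; exact hB0
    · rw [if_neg hx]; exact hψ0 x (le_of_not_ge hx)
  have hmono : Monotone g := by
    refine monotone_of_deriv_nonneg hdiff fun x => ?_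
    rw [hderiv x]; exact hD0 x
  have hconc : ConcaveOn ℝ Set.univ g := by
    have hanti : AntitoneOn (deriv g) (interior Set.univ) := by
      rw [interior_univ]
      intro x _ y _ hxy
      rw [hderiv x, hderiv y]
      exact hDanti hxy
    exact hanti.concaveOn_of_deriv convex_univ hdiff.continuous.continuousOn
      (by rw [interior_univ]; exact hdiff.differentiableOn)
  refine ⟨g, hmono, hconc, hdiff.continuous, hgc, ?_⟩
  intro x
  by_cases hx : x ≤ c
  · have : g x = aff x := by simp [hgdef, haffdef, hx]
    rw [this]
    have h1 : ‖aff x‖ ≤ c * Real.exp (-(t * c)) + B * |x - c| := by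
      refine (norm_add_le _ _).trans ?_
      rw [norm_neg, Real.norm_eq_abs, Real.norm_eq_abs, abs_mul, abs_mul,
        abs_of_nonneg hc.le, abs_of_nonneg (Real.exp_pos _).le, abs_of_nonneg hB0]
    have h2 : |x - c| ≤ |x| + c := by
      calc |x - c| ≤ |x| + |c| := abs_sub _ _
        _ = |x| + c := by rw [abs_of_nonneg hc.le]
    calc ‖aff x‖ ≤ c * Real.exp (-(t * c)) + B * (|x| + c) := by
          refine h1.trans ?_
          have := mul_le_mul_of_nonneg_left h2 hB0
          linarith
      _ ≤ (c * Real.exp (-(t * c)) + B * c) + (B + 1) * |x| := by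
          have : 0 ≤ |x| := abs_nonneg x
          nlinarith
  · push_neg at hx
    rw [hgc x hx.le]
    have hx0 : 0 < x := lt_trans hc hx
    have hexp : Real.exp (-(t * x)) ≤ 1 := by
      rw [Real.exp_le_one_iff]
      nlinarith
    have : ‖-(x * Real.exp (-(t * x)))‖ = x * Real.exp (-(t * x)) := by
      rw [norm_neg, Real.norm_eq_abs, abs_of_nonneg (mul_nonneg hx0.le (Real.exp_pos _).le)]
    rw [this]
    have h1 : x * Real.exp (-(t * x)) ≤ x := by
      nlinarith [Real.exp_pos (-(t * x))]
    have h2 : x ≤ |x| := le_abs_self x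
    have hB0' : (0:ℝ) ≤ Real.exp (-(t * c)) * (t * c - 1) :=
      mul_nonneg (Real.exp_pos _).le (by linarith)
    have h3 : (0:ℝ) ≤ c * Real.exp (-(t * c)) := mul_nonneg hc.le (Real.exp_pos _).le
    nlinarith [abs_nonneg x, mul_nonneg hB0' (abs_nonneg x), mul_nonneg hB0' hc.le]

end GlueSection

lemma aux_mean (μ : Measure ℝ) [IsProbabilityMeasure μ] (c : ℝ) (hc : 2 ≤ c)
    (hsupp : μ {x | x < c} = 0) (hint : Integrable (fun x => x) μ) :
    meanNat (mpoi μ) = ∫ l, l ∂μ := by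
  have hc0 : (0:ℝ) < c := by linarith
  have key := aux_interchange μ c hc0 hsupp hint
    (fun k l => (k : ℝ) * (Real.exp (-l) * l ^ k / (Nat.factorial k : ℝ)))
    (fun k => by continuity) (fun l => l) ?_
  · unfold meanNat mpoi
    rw [← key]
    exact tsum_congr fun k => (integral_const_mul _ _).symm
  · intro l hl
    have hl0 : (0:ℝ) ≤ l := le_trans hc0.le hl
    have harr : ∀ k : ℕ, (k : ℝ) * (Real.exp (-l) * l ^ k / (Nat.factorial k : ℝ))
        = Real.exp (-l) * ((k : ℝ) * (l ^ k / (Nat.factorial k : ℝ))) := fun k => by ring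
    refine ⟨((aux_summable_mul l).mul_left (Real.exp (-l))).congr fun k => (harr k).symm,
      fun k => mul_nonneg (Nat.cast_nonneg k) (div_nonneg
        (mul_nonneg (Real.exp_pos _).le (pow_nonneg hl0 k)) (Nat.cast_nonneg _)), ?_, le_refl l⟩
    rw [tsum_congr harr, tsum_mul_left, aux_tsum_mul, Real.exp_neg]
    field_simp

lemma aux_pgf (μ : Measure ℝ) [IsProbabilityMeasure μ] (c : ℝ) (hc : 2 ≤ c)
    (hsupp : μ {x | x < c} = 0) (hint : Integrable (fun x => x) μ)
    (s : ℝ) (hs0 : 0 ≤ s) (hs1 : s ≤ 1) :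
    pgf (downshift (mpoi μ)) s
      = (∫ l, l * Real.exp (-((1 - s) * l)) ∂μ) / meanNat (mpoi μ) := by
  have hc0 : (0:ℝ) < c := by linarith
  have key := aux_interchange μ c hc0 hsupp hint
    (fun k l => (Real.exp (-l) * l) * ((l * s) ^ k / (Nat.factorial k : ℝ)))
    (fun k => by continuity) (fun l => l * Real.exp (-((1 - s) * l))) ?_
  · unfold pgf downshift mpoi
    rw [← key, ← tsum_div_const]
    refine tsum_congr fun k => ?_
    have h1 : ∀ M : ℝ, ((k : ℝ) + 1) * (∫ l, Real.exp (-l) * l ^ (k+1) / (Nat.factorial (k+1) : ℝ) ∂μ) / M * s ^ k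
        = (((k : ℝ) + 1) * s ^ k) * (∫ l, Real.exp (-l) * l ^ (k+1) / (Nat.factorial (k+1) : ℝ) ∂μ) / M := by
      intro M; ring
    rw [h1, ← integral_const_mul]
    congr 1
    refine integral_congr_ae (Filter.Eventually.of_forall fun l => ?_)
    show ((k : ℝ) + 1) * s ^ k * (Real.exp (-l) * l ^ (k + 1) / (Nat.factorial (k + 1) : ℝ))
        = Real.exp (-l) * l * ((l * s) ^ k / (Nat.factorial k : ℝ))
    have hfk : ((Nat.factorial k : ℝ)) ≠ 0 := Nat.cast_ne_zero.2 k.factorial_pos.ne'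
    have hfk1 : ((k : ℝ) + 1) ≠ 0 := by positivity
    rw [Nat.factorial_succ, mul_pow, pow_succ]
    push_cast
    field_simp
  · intro l hl
    have hl0 : (0:ℝ) ≤ l := le_trans hc0.le hl
    refine ⟨(Real.summable_pow_div_factorial (l * s)).mul_left _,
      fun k => mul_nonneg (mul_nonneg (Real.exp_pos _).le hl0)
        (div_nonneg (pow_nonneg (mul_nonneg hl0 hs0) k) (Nat.cast_nonneg _)), ?_, ?_⟩
    · show (∑' k : ℕ, (Real.exp (-l) * l) * ((l * s) ^ k / (Nat.factorial k : ℝ))) = l * Real.exp (-((1 - s) * l))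
      rw [tsum_mul_left, aux_tsum_exp]
      have hadd : Real.exp (-l) * Real.exp (l * s) = Real.exp (-((1 - s) * l)) := by
        rw [← Real.exp_add]; ring_nf
      rw [← hadd]; ring
    · have h1 : Real.exp (-((1 - s) * l)) ≤ 1 := by
        rw [Real.exp_le_one_iff]
        nlinarith
      calc l * Real.exp (-((1 - s) * l)) ≤ l * 1 := by
            exact mul_le_mul_of_nonneg_left h1 hl0
        _ = l := mul_one l


theorem mpoi_downshift_pgf_ge (μ ν : Measure ℝ) (c : ℝ) (hc : 2 ≤ c)
    [IsProbabilityMeasure μ] [IsProbabilityMeasure ν]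
    (hμsupp : μ {x | x < c} = 0) (hνsupp : ν {x | x < c} = 0)
    (hμint : Integrable (fun x => x) μ) (hνint : Integrable (fun x => x) ν)
    (hicv : icvLEmeas μ ν) :
    ∀ s ∈ Set.Icc (0 : ℝ) (1 - 2 / c),
      pgf (downshift (mpoi ν)) s ≤ pgf (downshift (mpoi μ)) s := by
  intro s hs
  obtain ⟨hs0, hs1⟩ := hs
  have hc0 : (0:ℝ) < c := by linarith
  have h2c : (0:ℝ) < 2 / c := by positivity
  have hs1' : s ≤ 1 := by linarith
  have haeμ : ∀ᵐ l ∂μ, c ≤ l := by rw [ae_iff]; simpa [not_le] using hμsupp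
  have haeν : ∀ᵐ l ∂ν, c ≤ l := by rw [ae_iff]; simpa [not_le] using hνsupp
  have htc : 2 ≤ (1 - s) * c := by
    have h1 : 2 / c ≤ 1 - s := by linarith
    calc (2:ℝ) = (2 / c) * c := by field_simp
      _ ≤ (1 - s) * c := mul_le_mul_of_nonneg_right h1 hc0.le
  have hmμ : meanNat (mpoi μ) = ∫ l, l ∂μ := aux_mean μ c hc hμsupp hμint
  have hmν : meanNat (mpoi ν) = ∫ l, l ∂ν := aux_mean ν c hc hνsupp hνint
  have hmμc : c ≤ ∫ l, l ∂μ := by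
    have h1 : ∫ (_ : ℝ), c ∂μ = c := by simp
    rw [← h1]
    exact integral_mono_ae (integrable_const c) hμint haeμ
  have hid : ∫ l, l ∂μ ≤ ∫ l, l ∂ν := by
    refine hicv (fun x => x) (fun a b hab => hab) ?_ hμint hνint
    exact ⟨convex_univ, fun x _ y _ a b _ _ _ => by simp [smul_eq_mul]⟩
  obtain ⟨g, hgmono, hgconc, hgcont, hgeq, hgbound⟩ := aux_glue c (1 - s) hc0 htc
  have hgintμ : Integrable g μ := by
    refine Integrable.mono' ?_ hgcont.aestronglyMeasurable (Filter.Eventually.of_forall hgbound)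
    exact (integrable_const _).add (hμint.abs.const_mul _)
  have hgintν : Integrable g ν := by
    refine Integrable.mono' ?_ hgcont.aestronglyMeasurable (Filter.Eventually.of_forall hgbound)
    exact (integrable_const _).add (hνint.abs.const_mul _)
  have hgle : ∫ x, g x ∂μ ≤ ∫ x, g x ∂ν := hicv g hgmono hgconc hgintμ hgintν
  have hgeqμ : ∫ x, g x ∂μ = ∫ l, -(l * Real.exp (-((1 - s) * l))) ∂μ :=
    integral_congr_ae (haeμ.mono fun l hl => hgeq l hl)
  have hgeqν : ∫ x, g x ∂ν = ∫ l, -(l * Real.exp (-((1 - s) * l))) ∂ν :=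
    integral_congr_ae (haeν.mono fun l hl => hgeq l hl)
  have hIle : ∫ l, l * Real.exp (-((1 - s) * l)) ∂ν ≤ ∫ l, l * Real.exp (-((1 - s) * l)) ∂μ := by
    rw [hgeqμ, hgeqν, integral_neg, integral_neg, neg_le_neg_iff] at hgle
    exact hgle
  have hIμ0 : 0 ≤ ∫ l, l * Real.exp (-((1 - s) * l)) ∂μ :=
    integral_nonneg_of_ae (haeμ.mono fun l hl =>
      mul_nonneg (by linarith) (Real.exp_pos _).le)
  rw [aux_pgf μ c hc hμsupp hμint s hs0 hs1', aux_pgf ν c hc hνsupp hνint s hs0 hs1',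
    hmμ, hmν]
  exact div_le_div₀ hIμ0 hIle (by linarith) hid
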